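/- Let d ≥ 1 and let μ be a probability measure on ℝ^d × ℝ. Let l, m, u : ℝ^d → ℝ be fixed measurable functions with l(x) < m(x) < u(x) for all x. Let (X₁,Y₁),…,(X_n,Y_n),(X,Y) be i.i.d. with law μ. For a pair (x,y) define the conformity score c(x,y) = max((m(x) − y)/(m(x) − l(x)), (y − m(x))/(u(x) − m(x))), and set cᵢ = c(Xᵢ,Yᵢ) and c' = c(X,Y). Assume the law of c' is atomless. Let α ∈ (0,1), k = ⌈(1−α)(n+1)⌉ with k ≤ n, and let ĉ = c₍ₖ₎ be the k-th smallest of c₁,…,c_n. Then P( m(X) − ĉ·(m(X) − l(X)) ≤ Y ≤ m(X) + ĉ·(u(X) − m(X)) ) ≥ 1 − α. -/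

import Mathlib

open MeasureTheory ProbabilityTheory
open scoped ENNReal

/-- The `k`-th smallest entry (zero-indexed `k : Fin n`) of a tuple `v : Fin n → ℝ`. -/
noncomputable def kthSmallest {n : ℕ} (v : Fin n → ℝ) (k : Fin n) : ℝ :=
  v (Tuple.sort v k)


/-- If strictly fewer than `k` entries of `w` are `< t`, and `t` is not an entry,
then `t ≤` the `k`-th smallest entry. -/
lemma le_kthSmallest_of_card_lt {n k : ℕ} (w : Fin n → ℝ) (t : ℝ)
    (ht : ∀ i, w i ≠ t) (hk1 : 1 ≤ k) (hkn : k ≤ n)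
    (hcard : (Finset.univ.filter fun i => w i < t).card < k) :
    t ≤ kthSmallest w ⟨k - 1, by omega⟩ := by
  by_contra hlt
  push_neg at hlt
  unfold kthSmallest at hlt
  set σ := Tuple.sort w with hσ
  have hmono : Monotone (w ∘ σ) := Tuple.monotone_sort w
  have hsub : Finset.Iic (⟨k - 1, by omega⟩ : Fin n) ⊆
      Finset.univ.filter fun j => w (σ j) < t := by
    intro j hj
    simp only [Finset.mem_Iic] at hj
    exact Finset.mem_filter.2 ⟨Finset.mem_univ _, lt_of_le_of_lt (hmono hj) hlt⟩
  have h1 : k ≤ (Finset.univ.filter fun j => w (σ j) < t).card := by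
    have h := Finset.card_le_card hsub
    rw [Fin.card_Iic] at h
    simp only [Fin.val_mk] at h
    omega
  have h2 : (Finset.univ.filter fun j => w (σ j) < t).card
      = (Finset.univ.filter fun i => w i < t).card := by
    apply Finset.card_bij' (fun j _ => σ j) (fun i _ => σ.symm i) <;>
      simp
  omega

/-- For injective `v`, at least `k` indices have rank `< k`. -/
lemma card_rank_lt_ge {N k : ℕ} (hk : k ≤ N) (v : Fin N → ℝ) (hv : Function.Injective v) :
    k ≤ (Finset.univ.filter fun j : Fin N =>
      (Finset.univ.filter fun i => v i < v j).card < k).card := by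
  have hNpos : ∀ j : Fin N, (Finset.univ.filter fun i => v i < v j).card < N := by
    intro j
    have hss : (Finset.univ.filter fun i => v i < v j) ⊂ Finset.univ := by
      refine Finset.ssubset_univ_iff.2 ?_
      intro h
      have : j ∈ Finset.univ.filter fun i => v i < v j := by
        rw [h]; exact Finset.mem_univ j
      simp at this
    simpa using Finset.card_lt_card hss
  set ρ : Fin N → Fin N := fun j => ⟨(Finset.univ.filter fun i => v i < v j).card, hNpos j⟩
    with hρ
  have hmono : ∀ {j₁ j₂ : Fin N}, v j₁ < v j₂ → (ρ j₁ : ℕ) < (ρ j₂ : ℕ) := by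
    intro j₁ j₂ h
    show (Finset.univ.filter fun i => v i < v j₁).card < (Finset.univ.filter fun i => v i < v j₂).card
    apply Finset.card_lt_card
    constructor
    · intro i hi
      simp only [Finset.mem_filter, Finset.mem_univ, true_and] at hi ⊢
      exact hi.trans h
    · intro hsub
      have : j₁ ∈ Finset.univ.filter fun i => v i < v j₁ :=
        hsub (by simp [h])
      simp at this
  have hinj : Function.Injective ρ := by
    intro j₁ j₂ hj
    by_contra hne
    rcases lt_or_gt_of_ne (fun h => hne (hv h)) with h | h
    · exact absurd (congrArg Fin.val hj) (Nat.ne_of_lt (hmono h))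
    · exact absurd (congrArg Fin.val hj).symm (Nat.ne_of_lt (hmono h))
  have hsurj : Function.Surjective ρ := Finite.surjective_of_injective hinj
  have htcard : (Finset.univ.filter fun c : Fin N => (c : ℕ) < k).card = k := by
    conv_rhs => rw [← Finset.card_range k]
    refine Finset.card_bij' (fun c _ => (c : ℕ))
      (fun m hm => ⟨m, lt_of_lt_of_le (Finset.mem_range.1 hm) hk⟩) ?_ ?_ ?_ ?_
    · intro c hc; simp only [Finset.mem_filter] at hc
      simp [hc.2]
    · intro m hm; simp only [Finset.mem_range] at hm
      simp [hm]
    · intro c hc; simp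
    · intro m hm; simp
  calc k = (Finset.univ.filter fun c : Fin N => (c : ℕ) < k).card := htcard.symm
    _ ≤ _ := by
        apply Finset.card_le_card_of_surjOn ρ
        intro c hc
        simp only [Finset.coe_filter, Set.mem_setOf_eq, Finset.mem_univ, true_and] at hc ⊢
        obtain ⟨j, rfl⟩ := hsurj c
        exact ⟨j, hc, rfl⟩

/-- A product of copies of a probability measure is invariant under
permutation of coordinates. -/
lemma pi_map_comp_perm {N : ℕ} (ν : Measure ℝ) [IsProbabilityMeasure ν]
    (e : Equiv.Perm (Fin N)) :
    (Measure.pi fun _ : Fin N => ν).map (fun v i => v (e i)) =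
      Measure.pi fun _ : Fin N => ν := by
  have hmeas : Measurable fun (v : Fin N → ℝ) i => v (e i) :=
    measurable_pi_lambda _ fun i => measurable_pi_apply (e i)
  refine (Measure.pi_eq fun s hs => ?_).symm
  rw [Measure.map_apply hmeas (MeasurableSet.univ_pi hs)]
  have hpre : (fun (v : Fin N → ℝ) i => v (e i)) ⁻¹' Set.pi Set.univ s =
      Set.pi Set.univ fun i => s (e.symm i) := by
    ext v
    simp only [Set.mem_preimage, Set.mem_pi, Set.mem_univ, true_implies]
    constructor
    · intro h i
      simpa using h (e.symm i)
    · intro h i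
      simpa using h (e i)
  rw [hpre, Measure.pi_pi]
  exact Equiv.prod_comp e.symm fun i => ν (s i)

lemma card_filter_comp_perm {N : ℕ} (e : Equiv.Perm (Fin N)) (p : Fin N → Prop)
    [DecidablePred p] :
    (Finset.univ.filter fun i => p (e i)).card = (Finset.univ.filter p).card := by
  apply Finset.card_bij' (fun i _ => e i) (fun i _ => e.symm i) <;> simp

/-- Split-conformal coverage conditional on the trained
predictor: with fixed measurable `l < m < u` on `ℝ^d`, i.i.d. pairs
`(X₁,Y₁),…,(Xₙ,Yₙ),(X,Y)` with law `μ`, conformity scores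
`c(x,y) = max((m(x)-y)/(m(x)-l(x)), (y-m(x))/(u(x)-m(x)))` whose law is
atomless, `k = ⌈(1-α)(n+1)⌉ ≤ n`, and `ĉ = c₍ₖ₎`, the expanded interval
`[m(X) - ĉ(m(X)-l(X)), m(X) + ĉ(u(X)-m(X))]` covers `Y` with probability
at least `1 - α`. -/
theorem split_conformal_coverage_fixed_predictor
    {Ω : Type*} [MeasurableSpace Ω] (P : Measure Ω) [IsProbabilityMeasure P]
    (d n : ℕ) (hd : 1 ≤ d)
    (μ : Measure ((Fin d → ℝ) × ℝ)) [IsProbabilityMeasure μ]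
    (l m u : (Fin d → ℝ) → ℝ)
    (hl : Measurable l) (hm : Measurable m) (hu : Measurable u)
    (hord : ∀ x, l x < m x ∧ m x < u x)
    (W : Fin (n + 1) → Ω → (Fin d → ℝ) × ℝ)
    (hWmeas : ∀ i, Measurable (W i))
    (hWindep : iIndepFun W P)
    (hWlaw : ∀ i, P.map (W i) = μ)
    (score : (Fin d → ℝ) × ℝ → ℝ)
    (hscore : score = fun p =>
      max ((m p.1 - p.2) / (m p.1 - l p.1)) ((p.2 - m p.1) / (u p.1 - m p.1)))
    (hatomless : ∀ y : ℝ, μ {p | score p = y} = 0)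
    (α : ℝ) (hα : α ∈ Set.Ioo (0 : ℝ) 1)
    (k : ℕ) (hk : k = ⌈(1 - α) * ((n : ℝ) + 1)⌉₊) (hk1 : 1 ≤ k) (hkn : k ≤ n)
    (chat : Ω → ℝ)
    (hchat : chat = fun ω =>
      kthSmallest (fun i : Fin n => score (W i.castSucc ω)) ⟨k - 1, by omega⟩) :
    1 - α ≤ (P {ω |
      m (W (Fin.last n) ω).1 -
          chat ω * (m (W (Fin.last n) ω).1 - l (W (Fin.last n) ω).1) ≤
        (W (Fin.last n) ω).2 ∧
      (W (Fin.last n) ω).2 ≤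
        m (W (Fin.last n) ω).1 +
          chat ω * (u (W (Fin.last n) ω).1 - m (W (Fin.last n) ω).1)}).toReal := by
  classical
  have hml : ∀ x, 0 < m x - l x := fun x => sub_pos.2 (hord x).1
  have hum : ∀ x, 0 < u x - m x := fun x => sub_pos.2 (hord x).2
  have hsm : Measurable score := by
    rw [hscore]
    exact Measurable.max
      (((hm.comp measurable_fst).sub measurable_snd).div
        ((hm.comp measurable_fst).sub (hl.comp measurable_fst)))
      ((measurable_snd.sub (hm.comp measurable_fst)).div
        ((hu.comp measurable_fst).sub (hm.comp measurable_fst)))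
  set ν : Measure ℝ := μ.map score with hν
  have hνprob : IsProbabilityMeasure ν := Measure.isProbabilityMeasure_map hsm.aemeasurable
  have hν_atom : ∀ y : ℝ, ν {y} = 0 := by
    intro y
    rw [hν, Measure.map_apply hsm (measurableSet_singleton y)]
    have : score ⁻¹' {y} = {p | score p = y} := by ext p; simp [Set.mem_preimage]
    rw [this]; exact hatomless y
  set c : Fin (n + 1) → Ω → ℝ := fun i ω => score (W i ω) with hc
  have hcmeas : ∀ i, Measurable (c i) := fun i => hsm.comp (hWmeas i)
  have hc_indep : iIndepFun c P :=
    hWindep.comp (fun _ => score) fun _ => hsm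
  have hclaw : ∀ i, P.map (c i) = ν := by
    intro i
    rw [hν, ← hWlaw i, Measure.map_map hsm (hWmeas i)]
    rfl
  set F : Ω → (Fin (n + 1) → ℝ) := fun ω i => c i ω with hF
  have hFmeas : Measurable F := measurable_pi_lambda _ fun i => hcmeas i
  set π : Measure (Fin (n + 1) → ℝ) := Measure.pi fun _ => ν with hπ
  have hmapF : P.map F = π := by
    rw [hπ]
    refine (Measure.pi_eq fun s hs => ?_).symm
    rw [Measure.map_apply hFmeas (MeasurableSet.univ_pi hs)]
    have hpre : F ⁻¹' Set.pi Set.univ s = ⋂ i, c i ⁻¹' s i := by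
      ext ω; simp [hF, Set.mem_pi]
    rw [hpre, hc_indep.meas_iInter fun i => ⟨s i, hs i, rfl⟩]
    exact Finset.prod_congr rfl fun i _ => by
      rw [← hclaw i, Measure.map_apply (hcmeas i) (hs i)]
  -- rank events
  set A : Fin (n + 1) → Set (Fin (n + 1) → ℝ) := fun j =>
    {v | (Finset.univ.filter fun i => v i < v j).card < k} with hA
  have hAmeas : ∀ j, MeasurableSet (A j) := by
    intro j
    have hcm : Measurable fun v : Fin (n + 1) → ℝ =>
        (Finset.univ.filter fun i => v i < v j).card := by
      simp_rw [Finset.card_filter]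
      exact Finset.measurable_sum _ fun i _ =>
        Measurable.ite (measurableSet_lt (measurable_pi_apply i) (measurable_pi_apply j))
          measurable_const measurable_const
    exact hcm measurableSet_Iio
  set D : Set (Fin (n + 1) → ℝ) := {v | Function.Injective v} with hD
  have hDmeas : MeasurableSet D := by
    have hDeq : D = ⋂ (i : Fin (n + 1)) (j : Fin (n + 1)),
        {v : Fin (n + 1) → ℝ | v i = v j → i = j} := by
      ext v
      simp only [hD, Set.mem_setOf_eq, Set.mem_iInter, Function.Injective]
    rw [hDeq]
    refine MeasurableSet.iInter fun i => MeasurableSet.iInter fun j => ?_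
    by_cases hij : i = j
    · have : {v : Fin (n + 1) → ℝ | v i = v j → i = j} = Set.univ := by
        ext v; simp [hij]
      rw [this]; exact MeasurableSet.univ
    · have : {v : Fin (n + 1) → ℝ | v i = v j → i = j} = {v | v i = v j}ᶜ := by
        ext v; simp [hij]
      rw [this]
      exact (measurableSet_eq_fun (measurable_pi_apply i) (measurable_pi_apply j)).compl
  have hDnull : π Dᶜ = 0 := by
    have hpair : ∀ i j : Fin (n + 1), i ≠ j → π {v | v i = v j} = 0 := by
      intro i j hij
      have hIndep : IndepFun (c i) (c j) P := hc_indep.indepFun hij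
      have hmapped : P.map (fun ω => (c i ω, c j ω)) = ν.prod ν := by
        have h := (indepFun_iff_map_prod_eq_prod_map_map (hcmeas i).aemeasurable
          (hcmeas j).aemeasurable).1 hIndep
        rw [hclaw i, hclaw j] at h
        exact h
      have hdiag : MeasurableSet {p : ℝ × ℝ | p.1 = p.2} :=
        measurableSet_eq_fun measurable_fst measurable_snd
      have hij_meas : MeasurableSet {v : Fin (n + 1) → ℝ | v i = v j} :=
        measurableSet_eq_fun (measurable_pi_apply i) (measurable_pi_apply j)
      have hstep : F ⁻¹' {v : Fin (n + 1) → ℝ | v i = v j} =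
          (fun ω => (c i ω, c j ω)) ⁻¹' {p : ℝ × ℝ | p.1 = p.2} := by
        ext ω; simp [hF]
      calc π {v : Fin (n + 1) → ℝ | v i = v j}
          = (P.map F) {v | v i = v j} := by rw [hmapF]
        _ = P (F ⁻¹' {v | v i = v j}) := Measure.map_apply hFmeas hij_meas
        _ = P ((fun ω => (c i ω, c j ω)) ⁻¹' {p : ℝ × ℝ | p.1 = p.2}) := by rw [hstep]
        _ = (P.map (fun ω => (c i ω, c j ω))) {p : ℝ × ℝ | p.1 = p.2} :=
            (Measure.map_apply ((hcmeas i).prodMk (hcmeas j)) hdiag).symm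
        _ = (ν.prod ν) {p : ℝ × ℝ | p.1 = p.2} := by rw [hmapped]
        _ = 0 := by
            rw [Measure.prod_apply hdiag]
            have hfib : ∀ x : ℝ, ν (Prod.mk x ⁻¹' {p : ℝ × ℝ | p.1 = p.2}) = 0 := by
              intro x
              have : Prod.mk x ⁻¹' {p : ℝ × ℝ | p.1 = p.2} = {x} := by
                ext y; simp [eq_comm]
              rw [this]; exact hν_atom x
            simp_rw [hfib]
            simp
    have hsub : Dᶜ ⊆ ⋃ (i : Fin (n + 1)) (j : Fin (n + 1)) (_ : i ≠ j),
        {v : Fin (n + 1) → ℝ | v i = v j} := by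
      intro v hv
      simp only [hD, Set.mem_compl_iff, Set.mem_setOf_eq, Function.Injective] at hv
      push_neg at hv
      obtain ⟨i, j, hvij, hij⟩ := hv
      exact Set.mem_iUnion.2 ⟨i, Set.mem_iUnion.2 ⟨j, Set.mem_iUnion.2 ⟨hij, hvij⟩⟩⟩
    exact measure_mono_null hsub (measure_iUnion_null fun i => measure_iUnion_null fun j =>
      measure_iUnion_null fun hij => hpair i j hij)
  have hAperm : ∀ j, π (A j) = π (A (Fin.last n)) := by
    intro j
    set e := Equiv.swap (Fin.last n) j with he
    have hmp := pi_map_comp_perm ν e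
    have hTmeas : Measurable fun (v : Fin (n + 1) → ℝ) i => v (e i) :=
      measurable_pi_lambda _ fun i => measurable_pi_apply (e i)
    have hpre : (fun (v : Fin (n + 1) → ℝ) i => v (e i)) ⁻¹' A (Fin.last n) = A j := by
      ext v
      have helast : e (Fin.last n) = j := Equiv.swap_apply_left _ _
      simp only [hA, Set.mem_preimage, Set.mem_setOf_eq, helast]
      have hcc : (Finset.univ.filter fun i => v (e i) < v j).card =
          (Finset.univ.filter fun i => v i < v j).card := by
        apply Finset.card_bij' (fun i _ => e i) (fun i _ => e.symm i) <;> simp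
      rw [hcc]
    calc π (A j)
        = π ((fun (v : Fin (n + 1) → ℝ) i => v (e i)) ⁻¹' A (Fin.last n)) := by rw [hpre]
      _ = (π.map fun (v : Fin (n + 1) → ℝ) i => v (e i)) (A (Fin.last n)) :=
          (Measure.map_apply hTmeas (hAmeas _)).symm
      _ = π (A (Fin.last n)) := by rw [hπ, hmp]
  have hae : ∀ᵐ v ∂π, v ∈ D := by
    rw [ae_iff]
    have : {v : Fin (n + 1) → ℝ | ¬v ∈ D} = Dᶜ := rfl
    rw [this]; exact hDnull
  have hsum_ge : (k : ℝ≥0∞) ≤ ∑ j : Fin (n + 1), π (A j) := by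
    have hπprob : IsProbabilityMeasure π := by
      rw [hπ]; infer_instance
    calc (k : ℝ≥0∞) = ∫⁻ (_v : Fin (n + 1) → ℝ), (k : ℝ≥0∞) ∂π := by simp
      _ ≤ ∫⁻ v, ∑ j : Fin (n + 1), (A j).indicator (fun _ => (1 : ℝ≥0∞)) v ∂π := by
          refine lintegral_mono_ae ?_
          filter_upwards [hae] with v hv
          have hcount := card_rank_lt_ge (by omega : k ≤ n + 1) v hv
          have hsum_eq : ∑ j : Fin (n + 1), (A j).indicator (fun _ => (1 : ℝ≥0∞)) v =
              ((Finset.univ.filter fun j : Fin (n + 1) => v ∈ A j).card : ℝ≥0∞) := by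
            rw [Finset.card_filter]
            push_cast
            refine Finset.sum_congr rfl fun j _ => ?_
            by_cases hj : v ∈ A j <;> simp [Set.indicator, hj]
          rw [hsum_eq]
          exact_mod_cast hcount
      _ = ∑ j : Fin (n + 1), π (A j) := by
          rw [lintegral_finset_sum _ fun j _ => measurable_const.indicator (hAmeas j)]
          exact Finset.sum_congr rfl fun j _ => lintegral_indicator_one (hAmeas j)
  have hAlast : (k : ℝ≥0∞) ≤ ((n : ℝ≥0∞) + 1) * π (A (Fin.last n)) := by
    calc (k : ℝ≥0∞) ≤ ∑ j : Fin (n + 1), π (A j) := hsum_ge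
      _ = ∑ _j : Fin (n + 1), π (A (Fin.last n)) :=
          Finset.sum_congr rfl fun j _ => hAperm j
      _ = ((n : ℝ≥0∞) + 1) * π (A (Fin.last n)) := by
          rw [Finset.sum_const, Finset.card_univ, Fintype.card_fin, nsmul_eq_mul]
          push_cast
          ring
  -- inclusion into the coverage event
  set S : Set Ω := {ω |
      m (W (Fin.last n) ω).1 -
          chat ω * (m (W (Fin.last n) ω).1 - l (W (Fin.last n) ω).1) ≤
        (W (Fin.last n) ω).2 ∧
      (W (Fin.last n) ω).2 ≤
        m (W (Fin.last n) ω).1 +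
          chat ω * (u (W (Fin.last n) ω).1 - m (W (Fin.last n) ω).1)} with hS
  have hincl : F ⁻¹' (A (Fin.last n) ∩ D) ⊆ S := by
    intro ω hω
    obtain ⟨hωA, hωD⟩ := hω
    set v : Fin (n + 1) → ℝ := F ω with hv
    set w : Fin n → ℝ := fun i => v i.castSucc with hw
    set t : ℝ := v (Fin.last n) with ht
    have hvinj : Function.Injective v := hωD
    have htne : ∀ i : Fin n, w i ≠ t := by
      intro i hwi
      have := hvinj hwi
      exact absurd this (Fin.castSucc_lt_last i).ne
    have hcards : (Finset.univ.filter fun i : Fin (n + 1) => v i < t).card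
        = (Finset.univ.filter fun i : Fin n => w i < t).card := by
      have huniv : (Finset.univ : Finset (Fin (n + 1)))
          = insert (Fin.last n) (Finset.univ.map Fin.castSuccEmb) := by
        ext i
        simp only [Finset.mem_insert, Finset.mem_univ, iff_true, Finset.mem_map]
        refine iff_of_true trivial ?_
        by_cases h : i = Fin.last n
        · exact Or.inl h
        · obtain ⟨j, hj⟩ := Fin.exists_castSucc_eq.2 h
          exact Or.inr ⟨j, trivial, hj⟩
      rw [huniv, Finset.filter_insert, if_neg (by simp [ht]),
        Finset.filter_map, Finset.card_map]
      rfl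
    have hcard : (Finset.univ.filter fun i : Fin n => w i < t).card < k := by
      rw [← hcards]
      exact hωA
    have hkey : t ≤ kthSmallest w ⟨k - 1, by omega⟩ :=
      le_kthSmallest_of_card_lt w t htne hk1 hkn hcard
    have hchatω : chat ω = kthSmallest w ⟨k - 1, by omega⟩ := by
      rw [hchat]
    have hscoreω : score (W (Fin.last n) ω) ≤ chat ω := by
      rw [hchatω]; exact hkey
    rw [hscore] at hscoreω
    simp only [max_le_iff] at hscoreω
    obtain ⟨h1, h2⟩ := hscoreω
    set x := (W (Fin.last n) ω).1
    set y := (W (Fin.last n) ω).2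
    rw [div_le_iff₀ (hml x)] at h1
    rw [div_le_iff₀ (hum x)] at h2
    constructor
    · nlinarith [h1]
    · nlinarith [h2]
  have hPS : (k : ℝ≥0∞) / ((n : ℝ≥0∞) + 1) ≤ P S := by
    have hAD : π (A (Fin.last n)) ≤ π (A (Fin.last n) ∩ D) := by
      calc π (A (Fin.last n)) ≤ π ((A (Fin.last n) ∩ D) ∪ Dᶜ) := by
            refine measure_mono fun v hv => ?_
            by_cases hvD : v ∈ D
            · exact Or.inl ⟨hv, hvD⟩
            · exact Or.inr hvD
        _ ≤ π (A (Fin.last n) ∩ D) + π Dᶜ := measure_union_le _ _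
        _ = π (A (Fin.last n) ∩ D) := by rw [hDnull, add_zero]
    have hPpre : P (F ⁻¹' (A (Fin.last n) ∩ D)) = π (A (Fin.last n) ∩ D) := by
      rw [← hmapF, Measure.map_apply hFmeas ((hAmeas _).inter hDmeas)]
    have hdiv : (k : ℝ≥0∞) / ((n : ℝ≥0∞) + 1) ≤ π (A (Fin.last n)) := by
      rw [ENNReal.div_le_iff_le_mul (Or.inl (by simp)) (Or.inl (by simp))]
      calc (k : ℝ≥0∞) ≤ ((n : ℝ≥0∞) + 1) * π (A (Fin.last n)) := hAlast
        _ = π (A (Fin.last n)) * ((n : ℝ≥0∞) + 1) := mul_comm _ _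
    calc (k : ℝ≥0∞) / ((n : ℝ≥0∞) + 1) ≤ π (A (Fin.last n)) := hdiv
      _ ≤ π (A (Fin.last n) ∩ D) := hAD
      _ = P (F ⁻¹' (A (Fin.last n) ∩ D)) := hPpre.symm
      _ ≤ P S := measure_mono hincl
  have hfin : P S ≠ ⊤ := measure_ne_top P _
  have htoReal : ((k : ℝ≥0∞) / ((n : ℝ≥0∞) + 1)).toReal ≤ (P S).toReal :=
    ENNReal.toReal_mono hfin hPS
  have hval : ((k : ℝ≥0∞) / ((n : ℝ≥0∞) + 1)).toReal = (k : ℝ) / ((n : ℝ) + 1) := by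
    rw [ENNReal.toReal_div]
    norm_num
    rw [ENNReal.toReal_add (by simp) (by simp)]
    simp
  have hk_ge : (1 - α) * ((n : ℝ) + 1) ≤ (k : ℝ) := by
    rw [hk]; exact Nat.le_ceil _
  have hfrac : 1 - α ≤ (k : ℝ) / ((n : ℝ) + 1) := by
    rw [le_div_iff₀ (by positivity : (0 : ℝ) < (n : ℝ) + 1)]
    exact hk_ge
  calc (1 : ℝ) - α ≤ (k : ℝ) / ((n : ℝ) + 1) := hfrac
    _ = ((k : ℝ≥0∞) / ((n : ℝ≥0∞) + 1)).toReal := hval.symm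
    _ ≤ (P S).toReal := htoReal
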